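/- Let H₁, H₂, N₁, N₂ ∈ ℝ and τ* ≥ 0 with H₂ + N₂ > 0, H₁² - 2H₂ - N₁² > 0, and H₂² - N₂² > 0. Then the equation λ² + H₁λ + H₂ + (N₁λ + N₂)e^{-λτ*} = 0 has no root λ with Re(λ) = 0. -/

import Mathlib

theorem stmt_11 (H₁ H₂ N₁ N₂ τs : ℝ) (hτ : 0 ≤ τs)
    (h1 : 0 < H₂ + N₂) (h2 : 0 < H₁ ^ 2 - 2 * H₂ - N₁ ^ 2)
    (h3 : 0 < H₂ ^ 2 - N₂ ^ 2) :
    ∀ lam : ℂ,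
      lam ^ 2 + H₁ * lam + H₂ + (N₁ * lam + N₂) * Complex.exp (-lam * τs) = 0 →
      lam.re ≠ 0 := by
  intro lam heq hre
  set v := lam.im with hv
  have hlam : lam = (v : ℂ) * Complex.I := by
    apply Complex.ext <;> simp [hre, hv]
  have hexp : ‖Complex.exp (-lam * τs)‖ = 1 := by
    rw [Complex.norm_exp]
    simp [Complex.mul_re, hre]
  have h4 : lam ^ 2 + H₁ * lam + H₂ = -((N₁ * lam + N₂) * Complex.exp (-lam * τs)) := by
    linear_combination heq
  have h5 : Complex.normSq (lam ^ 2 + H₁ * lam + H₂) = Complex.normSq (N₁ * lam + N₂) := by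
    have h6 := congrArg (‖·‖) h4
    rw [norm_neg, norm_mul, hexp, mul_one] at h6
    rw [← Complex.sq_norm, ← Complex.sq_norm, h6]
  rw [hlam] at h5
  simp [Complex.normSq_apply, Complex.mul_re, Complex.mul_im, pow_two] at h5
  nlinarith [sq_nonneg v, sq_nonneg (v * v), sq_nonneg (H₂ - v * v), sq_nonneg (H₁ * v)]
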